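/- Let r and n be positive integers and let ε, ε' ∈ {0,1,…,r−1}^n be such that ε' is a permutation of the entries of ε (i.e., there is a permutation τ of {1,…,n} with ε'_i = ε_{τ(i)} for all i). Then there exists a bijection Ω : G_ε → G_{ε'} such that Des(Ω(γ,π)) = Des(γ,π) for every (γ,π) ∈ G_ε; consequently Ω preserves des, maj, and col. -/
import Mathlib


open Finset

/-- 1-based value of `π` at position `i ∈ {1,…,n}`, with the convention `π(0) = 0`. -/
def wval {n : ℕ} (π : Equiv.Perm (Fin n)) (i : ℕ) : ℕ :=
  if h : 1 ≤ i ∧ i ≤ n then (π ⟨i - 1, by omega⟩ : ℕ) + 1 else 0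

/-- Color at position `i` (1-based), with the convention `ε_0 = 0`. -/
def wcolor {n : ℕ} (ε : Fin n → ℕ) (i : ℕ) : ℕ :=
  if h : 1 ≤ i ∧ i ≤ n then ε ⟨i - 1, by omega⟩ else 0

/-- The Biagioli–Zeng order on colored letters: `(j,c) > (k,d)`. -/
def bzGT (a b : ℕ × ℕ) : Prop :=
  (a.2 = 0 ∧ b.2 = 0 ∧ b.1 < a.1) ∨ (0 < a.2 ∧ 0 < b.2 ∧ a.1 < b.1) ∨ (a.2 = 0 ∧ 0 < b.2)

instance (a b : ℕ × ℕ) : Decidable (bzGT a b) := by unfold bzGT; exact inferInstance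

/-- The descent set `Des(ε,π) ⊆ {0,…,n-1}` of a colored permutation. -/
def DesBZ {n : ℕ} (ε : Fin n → ℕ) (π : Equiv.Perm (Fin n)) : Finset ℕ :=
  (Finset.range n).filter fun i =>
    bzGT (wval π i, wcolor ε i) (wval π (i + 1), wcolor ε (i + 1))

def desBZ {n : ℕ} (ε : Fin n → ℕ) (π : Equiv.Perm (Fin n)) : ℕ := (DesBZ ε π).card

def majBZ {n : ℕ} (ε : Fin n → ℕ) (π : Equiv.Perm (Fin n)) : ℕ := ∑ i ∈ DesBZ ε π, i

/-- The color weight `col(ε)`. -/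
def colwt {n : ℕ} (ε : Fin n → ℕ) : ℕ := ∑ i, ε i

/-- Ordinary descent set `{i ∈ {1,…,n-1} : σ(i) > σ(i+1)}` (1-based). -/
def ordDes {n : ℕ} (σ : Equiv.Perm (Fin n)) : Finset ℕ :=
  (Finset.range n).filter fun i => 1 ≤ i ∧ wval σ (i + 1) < wval σ i

noncomputable def qP : MvPolynomial (Fin 2) ℤ := MvPolynomial.X 0
noncomputable def uP : MvPolynomial (Fin 2) ℤ := MvPolynomial.X 1
noncomputable def qNat (m : ℕ) : MvPolynomial (Fin 2) ℤ := ∑ i ∈ Finset.range m, qP ^ i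
noncomputable def uNat (m : ℕ) : MvPolynomial (Fin 2) ℤ := ∑ i ∈ Finset.range m, uP ^ i

/-- The monomial `m'(j,k)`. -/
noncomputable def mPrime (j k : ℕ) : MvPolynomial (Fin 2) ℤ :=
  if j ≤ k then qP ^ j else qP ^ ((j - 1) % k) * uP ^ ((j - 1) / k)

/-- Lattice points of `cone(F_ε)` at height `k`. -/
def Lset {n : ℕ} (ε : Fin n → ℕ) (k : ℕ) : Finset (Fin n → ℕ) :=
  Fintype.piFinset fun i =>
    if 0 < ε i then Finset.Ioc (k * ε i) (k * (ε i + 1)) else Finset.Icc 0 k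

/-- The set `G_ε ⊆ ℤ_r ≀ 𝔖_n` of colored permutations whose color vector is
`(ε_{π(1)},…,ε_{π(n)})`. -/
def Gset {n : ℕ} (ε : Fin n → ℕ) : Set ((Fin n → ℕ) × Equiv.Perm (Fin n)) :=
  {p | p.1 = fun i => ε (p.2 i)}

section Aux
variable {n : ℕ}

/-- Existence of a color-class-preserving, class-monotone permutation. -/
lemma exists_sigma (ε ε' : Fin n → ℕ) (τ : Equiv.Perm (Fin n))
    (hτ : ∀ i, ε' i = ε (τ i)) :
    ∃ σ : Equiv.Perm (Fin n), (∀ j, (ε' (σ j) = 0 ↔ ε j = 0)) ∧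
      (∀ j k, (ε j = 0 ↔ ε k = 0) → (σ j < σ k ↔ j < k)) := by
  classical
  set A : Finset (Fin n) := univ.filter fun j => ε j = 0 with hA
  set A' : Finset (Fin n) := univ.filter fun j => ε' j = 0 with hA'
  set B : Finset (Fin n) := univ.filter fun j => ¬ ε j = 0 with hB
  set B' : Finset (Fin n) := univ.filter fun j => ¬ ε' j = 0 with hB'
  have hAim : A' = A.image τ.symm := by
    ext j
    simp only [hA, hA', Finset.mem_image, Finset.mem_filter, Finset.mem_univ, true_and]
    constructor
    · intro h; exact ⟨τ j, by rw [← hτ]; exact h, τ.symm_apply_apply j⟩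
    · rintro ⟨a, ha, rfl⟩; rw [hτ, τ.apply_symm_apply]; exact ha
  have hBim : B' = B.image τ.symm := by
    ext j
    simp only [hB, hB', Finset.mem_image, Finset.mem_filter, Finset.mem_univ, true_and]
    constructor
    · intro h; exact ⟨τ j, by rw [← hτ]; exact h, τ.symm_apply_apply j⟩
    · rintro ⟨a, ha, rfl⟩; rw [hτ, τ.apply_symm_apply]; exact ha
  have hA'card : A'.card = A.card := by
    rw [hAim, Finset.card_image_of_injective _ τ.symm.injective]
  have hB'card : B'.card = B.card := by
    rw [hBim, Finset.card_image_of_injective _ τ.symm.injective]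
  let eA : Fin A.card ≃o A := A.orderIsoOfFin rfl
  let eA' : Fin A.card ≃o A' := A'.orderIsoOfFin hA'card
  let eB : Fin B.card ≃o B := B.orderIsoOfFin rfl
  let eB' : Fin B.card ≃o B' := B'.orderIsoOfFin hB'card
  let f : Fin n → Fin n := fun j =>
    if h : ε j = 0 then (eA' (eA.symm ⟨j, by simp [hA, h]⟩) : Fin n)
    else (eB' (eB.symm ⟨j, by simp [hB, h]⟩) : Fin n)
  have hfA : ∀ j, ε j = 0 → ε' (f j) = 0 := by
    intro j h
    have : (f j) ∈ A' := by
      simp only [f, dif_pos h]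
      exact (eA' _).2
    simpa [hA'] using this
  have hfB : ∀ j, ¬ ε j = 0 → ¬ ε' (f j) = 0 := by
    intro j h
    have : (f j) ∈ B' := by
      simp only [f, dif_neg h]
      exact (eB' _).2
    simpa [hB'] using this
  have h0 : ∀ j, (ε' (f j) = 0 ↔ ε j = 0) := by
    intro j
    by_cases h : ε j = 0
    · simp [h, hfA j h]
    · simp [h, hfB j h]
  have hm : ∀ j k, (ε j = 0 ↔ ε k = 0) → (f j < f k ↔ j < k) := by
    intro j k hjk
    by_cases h : ε j = 0
    · have h' : ε k = 0 := hjk.mp h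
      simp only [f, dif_pos h, dif_pos h']
      rw [Subtype.coe_lt_coe, OrderIso.lt_iff_lt, OrderIso.lt_iff_lt, Subtype.mk_lt_mk]
    · have h' : ¬ ε k = 0 := fun hk => h (hjk.mpr hk)
      simp only [f, dif_neg h, dif_neg h']
      rw [Subtype.coe_lt_coe, OrderIso.lt_iff_lt, OrderIso.lt_iff_lt, Subtype.mk_lt_mk]
  have hinj : Function.Injective f := by
    intro j k hjk
    by_cases h : ε j = 0 <;> by_cases h' : ε k = 0
    · have h1 : ¬ j < k := fun hl =>
        absurd ((hm j k (iff_of_true h h')).mpr hl) (by rw [hjk]; exact lt_irrefl _)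
      have h2 : ¬ k < j := fun hl =>
        absurd ((hm k j (iff_of_true h' h)).mpr hl) (by rw [hjk]; exact lt_irrefl _)
      exact le_antisymm (not_lt.mp h2) (not_lt.mp h1)
    · exact absurd (hjk ▸ hfA j h) (hfB k h')
    · exact absurd (hjk.symm ▸ hfA k h') (hfB j h)
    · have h1 : ¬ j < k := fun hl =>
        absurd ((hm j k (iff_of_false h h')).mpr hl) (by rw [hjk]; exact lt_irrefl _)
      have h2 : ¬ k < j := fun hl =>
        absurd ((hm k j (iff_of_false h' h)).mpr hl) (by rw [hjk]; exact lt_irrefl _)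
      exact le_antisymm (not_lt.mp h2) (not_lt.mp h1)
  refine ⟨Equiv.ofBijective f (Finite.injective_iff_bijective.mp hinj), ?_, ?_⟩
  · exact h0
  · exact hm

end Aux

section Aux2
variable {n : ℕ}

lemma bzGT_succ_iff (a b ca cb : ℕ) :
    bzGT (a + 1, ca) (b + 1, cb) ↔
      (ca = 0 ∧ cb = 0 ∧ b < a) ∨ (0 < ca ∧ 0 < cb ∧ a < b) ∨ (ca = 0 ∧ 0 < cb) := by
  unfold bzGT
  simp only
  omega

lemma bzGT_zero (v c : ℕ) : bzGT (0, 0) (v + 1, c) ↔ 0 < c := by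
  show (0 = 0 ∧ c = 0 ∧ v + 1 < 0) ∨ (0 < 0 ∧ 0 < c ∧ 0 < v + 1) ∨ (0 = 0 ∧ 0 < c) ↔ 0 < c
  omega

lemma bz_compare (ε ε' : Fin n → ℕ) (σ : Equiv.Perm (Fin n))
    (h0 : ∀ j, (ε' (σ j) = 0 ↔ ε j = 0))
    (hm : ∀ j k, (ε j = 0 ↔ ε k = 0) → (σ j < σ k ↔ j < k)) (a b : Fin n) :
    bzGT ((σ a : ℕ) + 1, ε' (σ a)) ((σ b : ℕ) + 1, ε' (σ b)) ↔
      bzGT ((a : ℕ) + 1, ε a) ((b : ℕ) + 1, ε b) := by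
  rw [bzGT_succ_iff, bzGT_succ_iff]
  by_cases ha : ε a = 0 <;> by_cases hb : ε b = 0
  · have hlt := hm b a (iff_of_true hb ha)
    have hlt2 := hm a b (iff_of_true ha hb)
    simp only [Fin.lt_def] at hlt hlt2
    simp only [(h0 a).mpr ha, (h0 b).mpr hb, ha, hb, hlt, hlt2]
  · have h0a := (h0 a).mpr ha
    have h0b : ε' (σ b) ≠ 0 := fun h => hb ((h0 b).mp h)
    simp only [h0a, ha]
    exact iff_of_true (Or.inr (Or.inr ⟨trivial, Nat.pos_of_ne_zero h0b⟩))
      (Or.inr (Or.inr ⟨trivial, Nat.pos_of_ne_zero hb⟩))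
  · have h0b := (h0 b).mpr hb
    have h0a : ε' (σ a) ≠ 0 := fun h => ha ((h0 a).mp h)
    simp only [h0b, hb]
    omega
  · have hlt := hm a b (iff_of_false ha hb)
    have hlt2 := hm b a (iff_of_false hb ha)
    have h0a : ε' (σ a) ≠ 0 := fun h => ha ((h0 a).mp h)
    have h0b : ε' (σ b) ≠ 0 := fun h => hb ((h0 b).mp h)
    simp only [Fin.lt_def] at hlt hlt2
    simp only [hlt, hlt2]
    omega

lemma DesBZ_congr (ε ε' : Fin n → ℕ) (σ π : Equiv.Perm (Fin n))
    (h0 : ∀ j, (ε' (σ j) = 0 ↔ ε j = 0))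
    (hm : ∀ j k, (ε j = 0 ↔ ε k = 0) → (σ j < σ k ↔ j < k)) :
    DesBZ (fun i => ε' ((σ * π) i)) (σ * π) = DesBZ (fun i => ε (π i)) π := by
  unfold DesBZ
  apply Finset.filter_congr
  intro i hi
  rw [Finset.mem_range] at hi
  have hi1 : 1 ≤ i + 1 ∧ i + 1 ≤ n := ⟨Nat.le_add_left _ _, hi⟩
  have hv1 : ∀ ρ : Equiv.Perm (Fin n), wval ρ (i + 1) = (ρ ⟨i, hi⟩ : ℕ) + 1 := by
    intro ρ; rw [wval, dif_pos hi1]; rfl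
  have hc1 : ∀ γ : Fin n → ℕ, wcolor γ (i + 1) = γ ⟨i, hi⟩ := by
    intro γ; rw [wcolor, dif_pos hi1]; rfl
  replace hv1 := hv1
  replace hc1 := hc1
  rcases Nat.eq_zero_or_pos i with rfl | hipos
  · have hv0 : ∀ ρ : Equiv.Perm (Fin n), wval ρ 0 = 0 := by
      intro ρ; rw [wval, dif_neg (by omega)]
    have hc0 : ∀ γ : Fin n → ℕ, wcolor γ 0 = 0 := by
      intro γ; rw [wcolor, dif_neg (by omega)]
    rw [hv0, hv0, hc0, hc0, hv1, hv1, hc1, hc1]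
    rw [bzGT_zero, bzGT_zero]
    simp only [Nat.pos_iff_ne_zero]
    exact not_congr (h0 (π ⟨0, hi⟩))
  · have hii : 1 ≤ i ∧ i ≤ n := ⟨hipos, by omega⟩
    have hvi : ∀ ρ : Equiv.Perm (Fin n), wval ρ i = (ρ ⟨i - 1, by omega⟩ : ℕ) + 1 := by
      intro ρ; rw [wval, dif_pos hii]
    have hci : ∀ γ : Fin n → ℕ, wcolor γ i = γ ⟨i - 1, by omega⟩ := by
      intro γ; rw [wcolor, dif_pos hii]
    rw [hvi, hvi, hci, hci, hv1, hv1, hc1, hc1]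
    simp only [Equiv.Perm.mul_apply]
    exact bz_compare ε ε' σ h0 hm (π ⟨i - 1, by omega⟩) (π ⟨i, hi⟩)

def gsetEquiv (ε : Fin n → ℕ) : Gset ε ≃ Equiv.Perm (Fin n) where
  toFun x := x.1.2
  invFun π := ⟨(fun i => ε (π i), π), rfl⟩
  left_inv x := by
    obtain ⟨⟨γ, π⟩, h⟩ := x
    exact Subtype.ext (Prod.ext h.symm rfl)
  right_inv π := rfl

end Aux2

theorem descent_preserving_bijection (r n : ℕ) (hr : 0 < r) (hn : 0 < n)
    (ε ε' : Fin n → ℕ) (hε : ∀ i, ε i < r) (hε' : ∀ i, ε' i < r)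
    (τ : Equiv.Perm (Fin n)) (hτ : ∀ i, ε' i = ε (τ i)) :
    ∃ Ω : Gset ε ≃ Gset ε',
      ∀ x : Gset ε,
        DesBZ (Ω x).1.1 (Ω x).1.2 = DesBZ x.1.1 x.1.2 ∧
        desBZ (Ω x).1.1 (Ω x).1.2 = desBZ x.1.1 x.1.2 ∧
        majBZ (Ω x).1.1 (Ω x).1.2 = majBZ x.1.1 x.1.2 ∧
        colwt (Ω x).1.1 = colwt x.1.1 := by
  obtain ⟨σ, h0, hm⟩ := exists_sigma ε ε' τ hτ
  refine ⟨(gsetEquiv ε).trans ((Equiv.mulLeft σ).trans (gsetEquiv ε').symm), ?_⟩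
  intro x
  obtain ⟨⟨γ, π⟩, hx⟩ := x
  have hx' : γ = fun i => ε (π i) := hx
  have hΩ : ((gsetEquiv ε).trans ((Equiv.mulLeft σ).trans (gsetEquiv ε').symm))
      ⟨(γ, π), hx⟩ = ⟨(fun i => ε' ((σ * π) i), σ * π), rfl⟩ := rfl
  rw [hΩ]
  simp only
  have hDes : DesBZ (fun i => ε' ((σ * π) i)) (σ * π) = DesBZ γ π := by
    rw [hx']; exact DesBZ_congr ε ε' σ π h0 hm
  refine ⟨hDes, by rw [desBZ, desBZ, hDes], by rw [majBZ, majBZ, hDes], ?_⟩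
  rw [colwt, colwt, hx']
  calc ∑ i, ε' ((σ * π) i) = ∑ i, ε' i := Equiv.sum_comp (σ * π) ε'
    _ = ∑ i, ε (τ i) := by simp only [hτ]
    _ = ∑ i, ε i := Equiv.sum_comp τ ε
    _ = ∑ i, ε (π i) := (Equiv.sum_comp π ε).symm
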